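/- Let M be a matroid on {1, …, n} with base family 𝓑 and let k ≥ 1. If U = B ∪ E and V = C ∪ F belong to S_k(𝓑) (with B, C ∈ 𝓑, E ⊆ set(B), F ⊆ set(C), |E| = |F| = k) and U and V are adjacent, i.e., |U \ V| = |V \ U| = 1, then U ∪ V ∈ S_{k+1}(𝓑); that is, A(S_k(𝓑)) ⊆ S_{k+1}(𝓑). -/

import Mathlib

/-- Two sets are *adjacent* if each has exactly one element outside the other. -/
def AdjacentSets {α : Type*} (B C : Set α) : Prop :=
  (B \ C).ncard = 1 ∧ (C \ B).ncard = 1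

/-- The *adjacency family* of a family of sets: all unions of adjacent pairs of members. -/
def adjFam {α : Type*} (𝓕 : Set (Set α)) : Set (Set α) :=
  {U | ∃ B ∈ 𝓕, ∃ C ∈ 𝓕, AdjacentSets B C ∧ U = B ∪ C}

/-- For a family `𝓑` of subsets of `{1, …, n}` (ordered so that `i >_lex j ↔ i < j` as
integers) and `B ∈ 𝓑`, the set `set(B)` consists of all `e ∉ B` for which there exists
`t ∈ B` with `e >_lex t` (that is, `e < t`) and `(B \ {t}) ∪ {e} ∈ 𝓑`. -/
def lexSet {n : ℕ} (𝓑 : Set (Set (Fin n))) (B : Set (Fin n)) : Set (Fin n) :=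
  {e | e ∉ B ∧ ∃ t ∈ B, e < t ∧ insert e (B \ {t}) ∈ 𝓑}

/-- `S_ℓ(𝓑) = { B ∪ E : B ∈ 𝓑, E ⊆ set(B), |E| = ℓ }`, the family of supports of the
`ℓ`-th multigraded shifts of the matroidal ideal of `𝓑`. -/
def shiftFam {n : ℕ} (𝓑 : Set (Set (Fin n))) (ℓ : ℕ) : Set (Set (Fin n)) :=
  {U | ∃ B ∈ 𝓑, ∃ E, E ⊆ lexSet 𝓑 B ∧ E.ncard = ℓ ∧ U = B ∪ E}


/-- weight of a set: sum of powers of two. -/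
private noncomputable def wt2 {n : ℕ} (S : Set (Fin n)) : ℕ := ∑ x ∈ S.toFinite.toFinset, 2 ^ (x : ℕ)

private lemma wt2_insert {n : ℕ} {S : Set (Fin n)} {a : Fin n} (h : a ∉ S) :
    wt2 (insert a S) = 2 ^ (a : ℕ) + wt2 S := by
  unfold wt2
  rw [show (insert a S).toFinite.toFinset = insert a S.toFinite.toFinset from by
    ext; simp, Finset.sum_insert (by simpa using h)]

/-- Key lemma: any loopless spanning set `W` of size `|B| + ℓ` is in `shiftFam 𝓑 ℓ`. -/
private lemma key {n : ℕ} (M : Matroid (Fin n)) (𝓑 : Set (Set (Fin n)))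
    (h𝓑 : 𝓑 = {B | M.IsBase B}) (W B : Set (Fin n)) (hB : M.IsBase B) (hBW : B ⊆ W)
    (hW : ∀ e ∈ W, M.Indep {e}) (ℓ : ℕ) (hcard : W.ncard = B.ncard + ℓ) :
    W ∈ shiftFam 𝓑 ℓ := by
  classical
  -- choose a base inside W of maximal weight
  set coll : Set (Set (Fin n)) := {B' | M.IsBase B' ∧ B' ⊆ W} with hcoll
  obtain ⟨B', hB'mem, hB'max⟩ := Set.Finite.exists_maximalFor wt2 coll (Set.toFinite coll)
     ⟨B, hB, hBW⟩
  obtain ⟨hB', hB'W⟩ := hB'mem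
  refine ⟨B', by rw [h𝓑]; exact hB', W \ B', ?_, ?_, by
    rw [Set.union_diff_cancel hB'W]⟩
  · -- W \ B' ⊆ lexSet 𝓑 B'
    intro e he
    obtain ⟨heW, heB'⟩ := he
    -- extend {e} to a base inside {e} ∪ B'
    obtain ⟨B'', hB'', heB'', hB''sub⟩ :=
      ((hW e heW)).exists_isBase_subset_union_isBase hB'
    have he2 : e ∈ B'' := heB'' rfl
    -- B'' \ B' = {e}
    have hd1 : B'' \ B' = {e} := by
      apply Set.Subset.antisymm
      · intro x hx
        rcases hB''sub hx.1 with h | h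
        · exact h
        · exact absurd h hx.2
      · exact fun x hx => by rcases hx with rfl; exact ⟨he2, heB'⟩
    -- B' \ B'' is a singleton {t}
    have hd2 : (B' \ B'').encard = 1 := by
      rw [hB'.encard_sdiff_comm hB'', hd1, Set.encard_singleton]
    obtain ⟨t, ht⟩ := Set.encard_eq_one.mp hd2
    have htB' : t ∈ B' := by
      have : t ∈ B' \ B'' := ht ▸ rfl
      exact this.1
    have htB'' : t ∉ B'' := by
      have : t ∈ B' \ B'' := ht ▸ rfl
      exact this.2
    have hne : t ≠ e := fun h => heB' (h ▸ htB')
    -- B'' = insert e (B' \ {t})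
    have hBeq : B'' = insert e (B' \ {t}) := by
      ext x
      constructor
      · intro hx
        by_cases hxe : x = e
        · exact hxe ▸ Set.mem_insert _ _
        · rcases hB''sub hx with h | h
          · exact absurd (Set.mem_singleton_iff.mp h) hxe
          · refine Set.mem_insert_of_mem _ ⟨h, ?_⟩
            intro hxt
            exact htB'' ((Set.mem_singleton_iff.mp hxt) ▸ hx)
      · intro hx
        rcases hx with rfl | ⟨hx1, hx2⟩
        · exact he2
        · by_contra hxB''
          have : x ∈ B' \ B'' := ⟨hx1, hxB''⟩
          rw [ht] at this
          exact hx2 this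
    -- maximality forces e < t
    have hcompare : ¬ t < e := by
      intro hlt
      have hB''mem : B'' ∈ coll := ⟨hB'', by
        rw [hBeq]
        exact Set.insert_subset heW ((Set.diff_subset).trans hB'W)⟩
      have hwt : wt2 B'' + 2 ^ (t : ℕ) = wt2 B' + 2 ^ (e : ℕ) := by
        have h1 : insert t B'' = insert e B' := by
          rw [hBeq, Set.insert_comm, Set.insert_diff_singleton,
            Set.insert_eq_of_mem htB']
        have h2 := wt2_insert (S := B'') (a := t) htB''
        have h3 := wt2_insert (S := B') (a := e) heB'
        rw [h1, h3] at h2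
        omega
      have hpow : 2 ^ (t : ℕ) < 2 ^ (e : ℕ) :=
        Nat.pow_lt_pow_right one_lt_two hlt
      have hle : wt2 B' < wt2 B'' := by omega
      have := hB'max (j := B'') hB''mem (le_of_lt hle)
      omega
    have hlt : e < t := lt_of_le_of_ne (not_lt.mp hcompare) (Ne.symm hne)
    exact ⟨heB', t, htB', hlt, by rw [h𝓑]; exact hBeq ▸ hB''⟩
  · -- cardinality
    have := Set.ncard_diff_add_ncard_of_subset hB'W (Set.toFinite W)
    have hBB' : B'.ncard = B.ncard := hB'.ncard_eq_ncard_of_isBase hB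
    omega

theorem adjFam_shiftFam_subset_shiftFam_succ {n : ℕ} (M : Matroid (Fin n))
    (hE : M.E = Set.univ) (𝓑 : Set (Set (Fin n))) (h𝓑 : 𝓑 = {B | M.IsBase B})
    (k : ℕ) (hk : 1 ≤ k) :
    (∀ U ∈ shiftFam 𝓑 k, ∀ V ∈ shiftFam 𝓑 k, AdjacentSets U V →
      U ∪ V ∈ shiftFam 𝓑 (k + 1)) ∧
    adjFam (shiftFam 𝓑 k) ⊆ shiftFam 𝓑 (k + 1) := by
  have main : ∀ U ∈ shiftFam 𝓑 k, ∀ V ∈ shiftFam 𝓑 k, AdjacentSets U V →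
      U ∪ V ∈ shiftFam 𝓑 (k + 1) := by
    intro U hU V hV hadj
    obtain ⟨B, hB𝓑, E, hEsub, hEcard, rfl⟩ := hU
    obtain ⟨C, hC𝓑, F, hFsub, hFcard, rfl⟩ := hV
    rw [h𝓑] at hB𝓑 hC𝓑
    -- every element of the union is a non-loop
    have hnl : ∀ e ∈ (B ∪ E) ∪ (C ∪ F), M.Indep {e} := by
      rintro e ((he | he) | (he | he))
      · exact hB𝓑.indep.subset (Set.singleton_subset_iff.mpr he)
      · obtain ⟨_, t, _, _, hb⟩ := hEsub he
        rw [h𝓑] at hb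
        exact hb.indep.subset (Set.singleton_subset_iff.mpr (Set.mem_insert _ _))
      · exact hC𝓑.indep.subset (Set.singleton_subset_iff.mpr he)
      · obtain ⟨_, t, _, _, hb⟩ := hFsub he
        rw [h𝓑] at hb
        exact hb.indep.subset (Set.singleton_subset_iff.mpr (Set.mem_insert _ _))
    have hdisjBE : Disjoint B E := Set.disjoint_left.mpr fun a haB haE =>
      (hEsub haE).1 haB
    have hUcard : (B ∪ E).ncard = B.ncard + k := by
      rw [Set.ncard_union_eq hdisjBE.symm.symm (Set.toFinite B) (Set.toFinite E), hEcard]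
    have hWcard : ((B ∪ E) ∪ (C ∪ F)).ncard = B.ncard + (k + 1) := by
      have h1 : (B ∪ E) ∪ (C ∪ F) = (B ∪ E) ∪ ((C ∪ F) \ (B ∪ E)) := by
        rw [Set.union_diff_self]
      rw [h1, Set.ncard_union_eq Set.disjoint_sdiff_right (Set.toFinite _)
        (Set.toFinite _), hUcard, hadj.2]
      omega
    exact key M 𝓑 h𝓑 _ B hB𝓑 ((Set.subset_union_left).trans Set.subset_union_left)
      hnl (k + 1) hWcard
  refine ⟨main, ?_⟩
  rintro W ⟨U, hU, V, hV, hadj, rfl⟩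
  exact main U hU V hV hadj
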